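/- Finding Pivots lemma (mathematical content of Lemma 2.2, with k rounds of global relaxation): assume the uniqueness assumption holds. Let d̂ be an estimate function, S a finite set of vertices, B ∈ ℝ≥0∞, and k ≥ 1 a natural number. Assume that for every vertex v with d̂(v) ≠ d(v) and d(v) < B there exists a complete vertex u ∈ S such that the shortest path to v visits u. Let Ũ := {v : d(v) < B and there exists u ∈ S such that the shortest path to v visits u}. Then there exists a set P ⊆ S with k · |P| ≤ |Ũ| such that for every x ∈ Ũ, at least one of the following holds: (i) (R^k d̂)(x) = d(x), where R^k is the k-fold iterate of the relaxation operator R; (ii) there exists y ∈ P with d̂(y) = d(y) such that the shortest path to x visits y. -/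

import Mathlib

open scoped ENNReal

namespace SSSP

variable {V : Type*}

/-- The weight of a walk (a list of vertices): the sum of `w` over consecutive pairs.
A one-vertex walk has weight 0. -/
noncomputable def walkWeight (w : V → V → ℝ≥0∞) : List V → ℝ≥0∞
  | [] => 0
  | [_] => 0
  | a :: b :: p => w a b + walkWeight w (b :: p)

/-- `p` is a walk from `u` to `v`: a nonempty list beginning at `u` and ending at `v`. -/
def IsWalk (u v : V) (p : List V) : Prop :=
  p ≠ [] ∧ p.head? = some u ∧ p.getLast? = some v

/-- The distance from `u` to `v`: the infimum of the weights of all walks from `u` to `v`. -/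
noncomputable def dist (w : V → V → ℝ≥0∞) (u v : V) : ℝ≥0∞ :=
  ⨅ p : {p : List V // IsWalk u v p}, walkWeight w p.1

/-- The shortest path (from `s`) to `v` visits `u`. -/
def Visits (w : V → V → ℝ≥0∞) (s u v : V) : Prop :=
  dist w s u + dist w u v = dist w s v

/-- The uniqueness assumption: any two distinct walks starting from `s` with finite
weight have different weights. -/
def UniqueWeights (w : V → V → ℝ≥0∞) (s : V) : Prop :=
  ∀ p q : List V, p ≠ [] → q ≠ [] → p.head? = some s → q.head? = some s →
    walkWeight w p ≠ ⊤ → walkWeight w q ≠ ⊤ → walkWeight w p = walkWeight w q → p = q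

/-- The relaxation operator. -/
noncomputable def relax (w : V → V → ℝ≥0∞) (f : V → ℝ≥0∞) : V → ℝ≥0∞ :=
  fun v => min (f v) (⨅ u, f u + w u v)

-- ====== new material ======
variable (w : V → V → ℝ≥0∞)

lemma walkWeight_append (p : List V) (u : V) (q : List V) :
    walkWeight w (p ++ u :: q) = walkWeight w (p ++ [u]) + walkWeight w (u :: q) := by
  induction p with
  | nil => simp [walkWeight]
  | cons a p ih =>
    cases p with
    | nil =>
      cases q with
      | nil => simp [walkWeight]
      | cons b q' => simp [walkWeight, add_assoc]
    | cons b p' =>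
      simp only [List.cons_append, List.append_eq, walkWeight] at ih ⊢
      rw [ih, add_assoc]

lemma isWalk_pair (u v : V) : IsWalk u v [u, v] := by
  refine ⟨by simp, by simp, by simp⟩

instance isWalk_nonempty (u v : V) : Nonempty {p : List V // IsWalk u v p} :=
  ⟨⟨[u, v], isWalk_pair u v⟩⟩

lemma dist_le {u v : V} {p : List V} (h : IsWalk u v p) :
    dist w u v ≤ walkWeight w p := iInf_le (fun p : {p : List V // IsWalk u v p} => walkWeight w p.1) ⟨p, h⟩

lemma dist_self (u : V) : dist w u u = 0 := by
  refine le_antisymm ?_ zero_le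
  have := dist_le w (u := u) (v := u) (p := [u]) ⟨by simp, by simp, by simp⟩
  simpa [walkWeight] using this

lemma dist_le_edge (u v : V) : dist w u v ≤ w u v := by
  have := dist_le w (isWalk_pair u v)
  simpa [walkWeight] using this

lemma IsWalk.head_eq {u v : V} {p : List V} (h : IsWalk u v p) : ∃ t, p = u :: t := by
  obtain ⟨hne, hh, -⟩ := h
  cases p with
  | nil => simp at hne
  | cons a t => simp at hh; exact ⟨t, by rw [hh]⟩

lemma isWalk_append {s u v : V} {p q : List V} (hp : IsWalk s u p) (hq : IsWalk u v q) :
    IsWalk s v (p ++ q.tail) ∧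
      walkWeight w (p ++ q.tail) = walkWeight w p + walkWeight w q := by
  obtain ⟨t, rfl⟩ := hq.head_eq
  obtain ⟨hpne, hph, hpl⟩ := hp
  have hpd : p.dropLast ++ [u] = p := by
    have : p.getLast (by exact hpne) = u := by
      rwa [List.getLast?_eq_getLast hpne, Option.some_inj] at hpl
    rw [← this]; exact List.dropLast_append_getLast hpne
  constructor
  · refine ⟨by simp [hpne], ?_, ?_⟩
    · cases p with
      | nil => simp at hpne
      | cons a p' => simpa using hph
    · cases t with
      | nil =>
        simp only [List.tail_cons, List.append_nil]
        have := hq.2.2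
        simp only [List.getLast?_singleton, Option.some_inj] at this
        rw [hpl, this]
      | cons b t' =>
        simp only [List.tail_cons]
        rw [List.getLast?_append (l := p) (l' := b :: t')]
        have := hq.2.2
        simp only [List.getLast?_cons_cons] at this ⊢
        rw [this]
        simp [Option.or]
  · simp only [List.tail_cons]
    conv_lhs => rw [← hpd]
    rw [List.append_assoc]
    simp only [List.singleton_append]
    rw [walkWeight_append w p.dropLast u t, hpd]

lemma getLast?_append_cons (a : List V) (x : V) (b : List V) :
    (a ++ x :: b).getLast? = (x :: b).getLast? := by
  rw [List.getLast?_append]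
  obtain ⟨y, hy⟩ := Option.isSome_iff_exists.mp
    (List.getLast?_isSome.mpr (List.cons_ne_nil x b))
  rw [hy]; rfl

lemma dist_triangle (s u v : V) : dist w s v ≤ dist w s u + dist w u v := by
  unfold dist
  rw [ENNReal.iInf_add]
  refine le_iInf fun p => ?_
  rw [ENNReal.add_iInf]
  refine le_iInf fun q => ?_
  obtain ⟨hw, heq⟩ := isWalk_append w p.2 q.2
  rw [← heq]
  exact dist_le w hw

lemma exists_dup_decomp {l : List V} (h : ¬ l.Nodup) :
    ∃ (a : List V) (x : V) (b : List V) (c : List V), l = a ++ x :: (b ++ x :: c) := by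
  induction l with
  | nil => simp at h
  | cons y t ih =>
    by_cases hy : y ∈ t
    · obtain ⟨b, c, rfl⟩ := List.append_of_mem hy
      exact ⟨[], y, b, c, by simp⟩
    · have ht : ¬ t.Nodup := fun hn => h (List.nodup_cons.mpr ⟨hy, hn⟩)
      obtain ⟨a, x, b, c, rfl⟩ := ih ht
      exact ⟨y :: a, x, b, c, by simp⟩

lemma head?_append_decomp (a : List V) (x : V) (b c : List V) :
    (a ++ x :: b).head? = (a ++ x :: c).head? := by
  cases a <;> simp

lemma isWalk_of_decomp {s v : V} {a : List V} {x : V} {b : List V}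
    (h : IsWalk s v (a ++ x :: b)) :
    IsWalk s x (a ++ [x]) ∧ IsWalk x v (x :: b) := by
  obtain ⟨-, hh, hl⟩ := h
  refine ⟨⟨by simp, ?_, ?_⟩, ⟨by simp, by simp, ?_⟩⟩
  · rw [← hh]; exact head?_append_decomp a x [] b
  · exact List.getLast?_concat
  · rw [← hl]; exact (getLast?_append_cons a x b).symm

lemma exists_nodup_walk_le {u v : V} :
    ∀ n (p : List V), p.length ≤ n → IsWalk u v p →
      ∃ q, IsWalk u v q ∧ q.Nodup ∧ walkWeight w q ≤ walkWeight w p := by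
  intro n
  induction n with
  | zero => intro p hl hw; exact absurd (List.length_eq_zero_iff.mp (Nat.le_zero.mp hl)) hw.1
  | succ n ih =>
    intro p hl hw
    by_cases hnd : p.Nodup
    · exact ⟨p, hw, hnd, le_rfl⟩
    · obtain ⟨a, x, b, c, rfl⟩ := exists_dup_decomp hnd
      have hq : IsWalk u v (a ++ x :: c) := by
        obtain ⟨hne, hh, hl'⟩ := hw
        refine ⟨by simp, by rw [← hh]; exact head?_append_decomp a x c (b ++ x :: c), ?_⟩
        rw [getLast?_append_cons] at hl' ⊢
        rw [show x :: (b ++ x :: c) = (x :: b) ++ x :: c by simp,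
          getLast?_append_cons] at hl'
        exact hl'
      have hwt : walkWeight w (a ++ x :: c) ≤ walkWeight w (a ++ x :: (b ++ x :: c)) := by
        rw [walkWeight_append w a x c, walkWeight_append w a x (b ++ x :: c)]
        refine add_le_add_right ?_ _
        rw [show (x :: (b ++ x :: c)) = (x :: b) ++ x :: c by simp,
          walkWeight_append w (x :: b) x c]
        exact le_add_self
      have hlen : (a ++ x :: c).length ≤ n := by
        simp only [List.length_append, List.length_cons] at hl ⊢
        omega
      obtain ⟨q, h1, h2, h3⟩ := ih _ hlen hq
      exact ⟨q, h1, h2, h3.trans hwt⟩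

lemma exists_shortest [Fintype V] (u v : V) :
    ∃ p, IsWalk u v p ∧ walkWeight w p = dist w u v := by
  classical
  have hfin : {p : List V | IsWalk u v p ∧ p.Nodup}.Finite := by
    refine (List.finite_length_le V (Fintype.card V)).subset ?_
    intro p hp
    exact hp.2.length_le_card
  have hne : {p : List V | IsWalk u v p ∧ p.Nodup}.Nonempty := by
    obtain ⟨q, h1, h2, -⟩ :=
      exists_nodup_walk_le w ([u, v]).length [u, v] le_rfl (isWalk_pair u v)
    exact ⟨q, h1, h2⟩
  obtain ⟨p₀, hp₀, hmin⟩ := Set.exists_min_image _ (walkWeight w) hfin hne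
  refine ⟨p₀, hp₀.1, le_antisymm ?_ (dist_le w hp₀.1)⟩
  refine le_iInf fun q => ?_
  obtain ⟨q', h1, h2, h3⟩ := exists_nodup_walk_le w q.1.length q.1 le_rfl q.2
  exact (hmin q' ⟨h1, h2⟩).trans h3

lemma ennreal_split {a a' b b' : ℝ≥0∞} (ha : a ≤ a') (hb : b ≤ b')
    (hs : a' + b' ≤ a + b) (hfin : a' + b' ≠ ⊤) : a' = a ∧ b' = b := by
  have hb' : b' ≠ ⊤ := fun h => hfin (by simp [h])
  have ha'' : a' ≠ ⊤ := fun h => hfin (by simp [h])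
  have heq : a' + b' = a + b := le_antisymm hs (add_le_add ha hb)
  constructor
  · refine le_antisymm ?_ ha
    have : a' + b' ≤ a + b' := heq.le.trans (add_le_add_right hb a)
    exact (ENNReal.add_le_add_iff_right hb').mp this
  · refine le_antisymm ?_ hb
    have : a' + b' ≤ a' + b := heq.le.trans (add_le_add_left ha b)
    exact (ENNReal.add_le_add_iff_left ha'').mp this

lemma split_spec {s x : V} {a b : List V} {y : V}
    (hw : IsWalk s x (a ++ y :: b)) (hwt : walkWeight w (a ++ y :: b) = dist w s x)
    (hfin : dist w s x ≠ ⊤) :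
    walkWeight w (a ++ [y]) = dist w s y ∧ walkWeight w (y :: b) = dist w y x ∧
      Visits w s y x := by
  obtain ⟨h1, h2⟩ := isWalk_of_decomp hw
  have e := walkWeight_append w a y b
  have hsum : walkWeight w (a ++ [y]) + walkWeight w (y :: b) ≤ dist w s y + dist w y x := by
    rw [← e, hwt]; exact dist_triangle w s y x
  have hfin' : walkWeight w (a ++ [y]) + walkWeight w (y :: b) ≠ ⊤ := by
    rw [← e, hwt]; exact hfin
  obtain ⟨e1, e2⟩ := ennreal_split (dist_le w h1) (dist_le w h2) hsum hfin'
  refine ⟨e1, e2, ?_⟩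
  show dist w s y + dist w y x = dist w s x
  rw [← e1, ← e2, ← e, hwt]

lemma IsWalk.ne_nil {u v : V} {p : List V} (h : IsWalk u v p) : p ≠ [] := h.1

lemma shortest_unique {s : V} (huniq : UniqueWeights w s) {x : V} {p q : List V}
    (hp : IsWalk s x p) (hq : IsWalk s x q)
    (hpw : walkWeight w p = dist w s x) (hqw : walkWeight w q = dist w s x)
    (hfin : dist w s x ≠ ⊤) : p = q :=
  huniq p q hp.1 hq.1 hp.2.1 hq.2.1 (by rw [hpw]; exact hfin) (by rw [hqw]; exact hfin)
    (by rw [hpw, hqw])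

lemma dist_init_ne_top {s x y : V} {a b : List V}
    (hw : IsWalk s x (a ++ y :: b)) (hwt : walkWeight w (a ++ y :: b) = dist w s x)
    (hfin : dist w s x ≠ ⊤) : dist w s y ≠ ⊤ := by
  obtain ⟨e1, e2, -⟩ := split_spec w hw hwt hfin
  intro h
  apply hfin
  have := (split_spec w hw hwt hfin).1
  rw [← this] at h
  have : walkWeight w (a ++ y :: b) = ⊤ := by
    rw [walkWeight_append w a y b, h]; simp
  rw [← hwt]; exact this

lemma sp_prefix {s : V} (huniq : UniqueWeights w s) {x : V} {a b : List V} {y : V}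
    (hw : IsWalk s x (a ++ y :: b)) (hwt : walkWeight w (a ++ y :: b) = dist w s x)
    (hfin : dist w s x ≠ ⊤) {q : List V}
    (hq : IsWalk s y q) (hqt : walkWeight w q = dist w s y) : q = a ++ [y] := by
  obtain ⟨e1, -, -⟩ := split_spec w hw hwt hfin
  exact shortest_unique w huniq hq (isWalk_of_decomp hw).1 hqt e1
    (dist_init_ne_top w hw hwt hfin)

lemma shortest_nodup {s : V} (huniq : UniqueWeights w s) {x : V} {p : List V}
    (hp : IsWalk s x p) (hpw : walkWeight w p = dist w s x)
    (hfin : dist w s x ≠ ⊤) : p.Nodup := by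
  by_contra h
  obtain ⟨a, y, b, c, rfl⟩ := exists_dup_decomp h
  have hd2 : a ++ y :: (b ++ y :: c) = (a ++ y :: b) ++ y :: c := by simp
  have hw2 : IsWalk s x ((a ++ y :: b) ++ y :: c) := hd2 ▸ hp
  have hwt2 : walkWeight w ((a ++ y :: b) ++ y :: c) = dist w s x := hd2 ▸ hpw
  have p1 := sp_prefix w huniq hp hpw hfin (isWalk_of_decomp hp).1
    (split_spec w hp hpw hfin).1
  have p2 := sp_prefix w huniq hp hpw hfin (isWalk_of_decomp hw2).1
    (split_spec w hw2 hwt2 hfin).1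
  rw [p1] at p2
  have := congrArg List.length p2
  simp at this

lemma visits_iff_mem [Fintype V] {s : V} (huniq : UniqueWeights w s) {x : V} {p : List V}
    (hp : IsWalk s x p) (hpw : walkWeight w p = dist w s x)
    (hfin : dist w s x ≠ ⊤) (u : V) :
    Visits w s u x ↔ u ∈ p := by
  constructor
  · intro hv
    have hsu : dist w s u ≠ ⊤ := fun h => hfin (by
      have := hv
      unfold Visits at this
      rw [← this, h]; simp)
    obtain ⟨p₁, hp₁, hw₁⟩ := exists_shortest w s u
    obtain ⟨q₁, hq₁, hw₂⟩ := exists_shortest w u x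
    obtain ⟨hcw, hce⟩ := isWalk_append w hp₁ hq₁
    have : walkWeight w (p₁ ++ q₁.tail) = dist w s x := by
      rw [hce, hw₁, hw₂, hv]
    have hpq := shortest_unique w huniq hp hcw hpw this hfin
    rw [hpq]
    have : u ∈ p₁ := by
      have h := hp₁.2.2
      rw [List.getLast?_eq_getLast hp₁.1, Option.some_inj] at h
      rw [← h]; exact List.getLast_mem hp₁.1
    exact List.mem_append_left _ this
  · intro hmem
    obtain ⟨a, b, rfl⟩ := List.append_of_mem hmem
    exact (split_spec w hp hpw hfin).2.2

lemma relax_le (f : V → ℝ≥0∞) : relax w f ≤ f := fun v => min_le_left _ _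

lemma iterate_relax_le (f : V → ℝ≥0∞) (k : ℕ) : (relax w)^[k] f ≤ f := by
  induction k with
  | zero => simp
  | succ n ih =>
    rw [Function.iterate_succ_apply']
    exact le_trans (relax_le w _) ih

lemma dist_le_relax {s : V} {f : V → ℝ≥0∞} (hf : ∀ v, dist w s v ≤ f v) (v : V) :
    dist w s v ≤ relax w f v := by
  refine le_min (hf v) (le_iInf fun u => ?_)
  exact le_trans (le_trans (dist_triangle w s u v) (add_le_add_left (hf u) _))
    (add_le_add_right (dist_le_edge w u v) _)

lemma dist_le_iterate_relax {s : V} {f : V → ℝ≥0∞} (hf : ∀ v, dist w s v ≤ f v) (k : ℕ)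
    (v : V) : dist w s v ≤ (relax w)^[k] f v := by
  induction k generalizing v with
  | zero => exact hf v
  | succ n ih =>
    rw [Function.iterate_succ_apply']
    exact dist_le_relax w ih v

lemma relax_walk {v : V} (q : List V) :
    ∀ (j : ℕ) (f : V → ℝ≥0∞) (u : V), IsWalk u v q → q.length ≤ j + 1 →
      (relax w)^[j] f v ≤ f u + walkWeight w q := by
  induction q with
  | nil => intro j f u hq; exact absurd rfl hq.1
  | cons a t ih =>
    intro j f u hq hl
    obtain ⟨t', ht'⟩ := hq.head_eq
    have ha : a = u := by
      have := List.cons.injEq a t u t' ▸ ht'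
      exact (List.cons.injEq a t u t').mp ht' |>.1
    subst ha
    cases t with
    | nil =>
      have hv : v = a := by
        have := hq.2.2; simp at this; exact this.symm
      subst hv
      have : walkWeight w [v] = 0 := rfl
      rw [this, add_zero]
      exact iterate_relax_le w f j v
    | cons b t2 =>
      have hj : 1 ≤ j := by
        have := hl; simp at this; omega
      obtain ⟨j', rfl⟩ : ∃ j', j = j' + 1 := ⟨j - 1, by omega⟩
      have hwalk : IsWalk b v (b :: t2) := by
        refine ⟨by simp, by simp, ?_⟩
        have h := hq.2.2
        rwa [show a :: b :: t2 = [a] ++ b :: t2 from rfl,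
          getLast?_append_cons [a] b t2] at h
      have hlen : (b :: t2).length ≤ j' + 1 := by
        simp at hl ⊢; omega
      rw [Function.iterate_succ_apply]
      have step := ih (j') (relax w f) b hwalk hlen
      refine le_trans step ?_
      have : relax w f b ≤ f a + w a b :=
        le_trans (min_le_right _ _) (iInf_le _ a)
      calc relax w f b + walkWeight w (b :: t2)
          ≤ (f a + w a b) + walkWeight w (b :: t2) := add_le_add_left this _
        _ = f a + walkWeight w (a :: b :: t2) := by rw [add_assoc]; rfl

lemma exists_first_mem {P : V → Prop} {l : List V} (h : ∃ y ∈ l, P y) :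
    ∃ a y b, l = a ++ y :: b ∧ P y ∧ ∀ z ∈ a, ¬ P z := by
  induction l with
  | nil => simp at h
  | cons c t ih =>
    by_cases hc : P c
    · exact ⟨[], c, t, rfl, hc, by simp⟩
    · have ht : ∃ y ∈ t, P y := by
        obtain ⟨y, hy, hPy⟩ := h
        rcases List.mem_cons.mp hy with rfl | hyt
        · exact absurd hPy hc
        · exact ⟨y, hyt, hPy⟩
      obtain ⟨a, y, b, rfl, hy, ha⟩ := ih ht
      refine ⟨c :: a, y, b, by simp, hy, ?_⟩
      intro z hz
      rcases List.mem_cons.mp hz with rfl | hza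
      · exact hc
      · exact ha z hza

lemma first_unique {P : V → Prop} :
    ∀ (a₁ : List V) {y₁ : V} {b₁ a₂ : List V} {y₂ : V} {b₂ : List V},
      a₁ ++ y₁ :: b₁ = a₂ ++ y₂ :: b₂ →
      P y₁ → P y₂ → (∀ z ∈ a₁, ¬ P z) → (∀ z ∈ a₂, ¬ P z) → y₁ = y₂ := by
  intro a₁
  induction a₁ with
  | nil =>
    intro y₁ b₁ a₂ y₂ b₂ heq h1 h2 _ ha₂
    cases a₂ with
    | nil => simpa using congrArg List.head? heq
    | cons c a₂' =>
      exfalso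
      have : y₁ = c := by simpa using congrArg List.head? heq
      exact ha₂ c (by simp) (this ▸ h1)
  | cons c a₁' ih =>
    intro y₁ b₁ a₂ y₂ b₂ heq h1 h2 ha₁ ha₂
    cases a₂ with
    | nil =>
      exfalso
      have : c = y₂ := by simpa using congrArg List.head? heq
      exact ha₁ c (by simp) (this ▸ h2)
    | cons c' a₂' =>
      simp only [List.cons_append, List.cons.injEq] at heq
      exact ih heq.2 h1 h2 (fun z hz => ha₁ z (by simp [hz])) (fun z hz => ha₂ z (by simp [hz]))


end SSSP

namespace SSSP

/-- Finding Pivots lemma (mathematical content of Lemma 2.2 with `k` rounds of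
global relaxation). -/
theorem finding_pivots {V : Type*} [Fintype V] (w : V → V → ℝ≥0∞) (s : V)
    (huniq : UniqueWeights w s)
    (dhat : V → ℝ≥0∞) (hest : ∀ v, dist w s v ≤ dhat v)
    (S : Set V) (B : ℝ≥0∞) (k : ℕ) (hk : 1 ≤ k)
    (hS : ∀ v, dhat v ≠ dist w s v → dist w s v < B →
      ∃ u ∈ S, dhat u = dist w s u ∧ Visits w s u v) :
    ∃ P ⊆ S,
      k * P.ncard ≤ ({v | dist w s v < B ∧ ∃ u ∈ S, Visits w s u v}).ncard ∧
      ∀ x ∈ {v | dist w s v < B ∧ ∃ u ∈ S, Visits w s u v},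
        (relax w)^[k] dhat x = dist w s x ∨
        ∃ y ∈ P, dhat y = dist w s y ∧ Visits w s y x := by
  classical
  set U : Set V := {v | dist w s v < B ∧ ∃ u ∈ S, Visits w s u v} with hU
  obtain ⟨sp, hw, hwt⟩ : ∃ sp : V → List V,
      (∀ v, IsWalk s v (sp v)) ∧ ∀ v, walkWeight w (sp v) = dist w s v := by
    choose sp h1 h2 using fun v => exists_shortest w s v
    exact ⟨sp, h1, h2⟩
  have hfin : ∀ x ∈ U, dist w s x ≠ ⊤ := fun x hx => (hx.1.trans_le le_top).ne
  -- root existence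
  have hroot : ∀ x ∈ U, ∃ y, y ∈ S ∧ dhat y = dist w s y ∧ Visits w s y x ∧
      ∃ a b, sp x = a ++ y :: b ∧ ∀ z ∈ a, z ∉ S := by
    rintro x hx
    obtain ⟨hxB, u, huS, huv⟩ := hx
    have hfx : dist w s x ≠ ⊤ := hfin x ⟨hxB, u, huS, huv⟩
    have humem : u ∈ sp x := (visits_iff_mem w huniq (hw x) (hwt x) hfx u).mp huv
    obtain ⟨a, y, b, hdec, hyS, ha⟩ :=
      exists_first_mem (P := fun z => z ∈ S) ⟨u, humem, huS⟩
    have hwx : IsWalk s x (a ++ y :: b) := hdec ▸ hw x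
    have hwtx : walkWeight w (a ++ y :: b) = dist w s x := hdec ▸ hwt x
    obtain ⟨e1, e2, hvis⟩ := split_spec w hwx hwtx hfx
    have hdyx : dist w s y ≤ dist w s x := by
      conv_rhs => rw [← hvis]
      exact le_self_add
    have hfy : dist w s y ≠ ⊤ := dist_init_ne_top w hwx hwtx hfx
    have hcomp : dhat y = dist w s y := by
      by_contra hc
      obtain ⟨u', hu'S, hu'c, hu'v⟩ := hS y hc (lt_of_le_of_lt hdyx hxB)
      have hspy : sp y = a ++ [y] := sp_prefix w huniq hwx hwtx hfx (hw y) (hwt y)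
      have hmem' : u' ∈ sp y := (visits_iff_mem w huniq (hw y) (hwt y) hfy u').mp hu'v
      rw [hspy] at hmem'
      rcases List.mem_append.mp hmem' with h | h
      · exact ha u' h hu'S
      · simp at h
        subst h
        exact hc hu'c
    exact ⟨y, hyS, hcomp, hvis, a, b, hdec, ha⟩
  choose! r hrS hrC hrV hrD using hroot
  -- fiber stability
  have hfib : ∀ x ∈ U, ∀ a b, sp x = a ++ r x :: b → (∀ z ∈ a, z ∉ S) →
      ∀ y ∈ r x :: b, y ∈ U ∧ r y = r x := by
    intro x hx a b hdec ha y hy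
    have hfx := hfin x hx
    obtain ⟨c, e, hce⟩ := List.append_of_mem hy
    have hdec2 : sp x = (a ++ c) ++ y :: e := by rw [hdec, hce]; simp
    have hwx : IsWalk s x ((a ++ c) ++ y :: e) := hdec2 ▸ hw x
    have hwtx : walkWeight w ((a ++ c) ++ y :: e) = dist w s x := hdec2 ▸ hwt x
    obtain ⟨e1, e2, hvis⟩ := split_spec w hwx hwtx hfx
    have hfy : dist w s y ≠ ⊤ := dist_init_ne_top w hwx hwtx hfx
    have hdyx : dist w s y ≤ dist w s x := by
      conv_rhs => rw [← hvis]
      exact le_self_add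
    have hspy : sp y = (a ++ c) ++ [y] := sp_prefix w huniq hwx hwtx hfx (hw y) (hwt y)
    -- r x is in sp y, and the decomposition with a S-free
    have hdecy : ∃ b', sp y = a ++ r x :: b' := by
      cases c with
      | nil =>
        have : y = r x := by
          have := hce.symm
          simp only [List.nil_append, List.cons.injEq] at this
          exact this.1
        subst this
        exact ⟨[], by simpa using hspy⟩
      | cons c₀ c' =>
        have hc₀ : c₀ = r x := by simpa using congrArg List.head? hce.symm
        subst hc₀
        exact ⟨c' ++ [y], by rw [hspy]; simp⟩
    obtain ⟨b', hdecy⟩ := hdecy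
    have hrxS : r x ∈ S := hrS x hx
    have hyU : y ∈ U := by
      refine ⟨lt_of_le_of_lt hdyx hx.1, r x, hrxS, ?_⟩
      refine (visits_iff_mem w huniq (hw y) (hwt y) hfy (r x)).mpr ?_
      rw [hdecy]
      simp
    refine ⟨hyU, ?_⟩
    obtain ⟨a', b'', hdec', ha'⟩ := hrD y hyU
    exact (first_unique (P := fun z => z ∈ S) a' (hdec' ▸ hdecy) (hrS y hyU) hrxS ha' ha)
  -- badness implies long tail
  have hbadlen : ∀ x ∈ U, (relax w)^[k] dhat x ≠ dist w s x →
      ∀ a b, sp x = a ++ r x :: b → k ≤ b.length := by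
    intro x hx hbad a b hdec
    by_contra hlen
    push_neg at hlen
    have hfx := hfin x hx
    have hwx : IsWalk s x (a ++ r x :: b) := hdec ▸ hw x
    have hwtx : walkWeight w (a ++ r x :: b) = dist w s x := hdec ▸ hwt x
    obtain ⟨e1, e2, hvis⟩ := split_spec w hwx hwtx hfx
    have hwalk : IsWalk (r x) x (r x :: b) := (isWalk_of_decomp hwx).2
    have hrel := relax_walk w (r x :: b) k dhat (r x) hwalk (by simp; omega)
    have : (relax w)^[k] dhat x ≤ dist w s x := by
      refine hrel.trans ?_
      rw [hrC x hx, e2]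
      exact hvis.le
    exact hbad (le_antisymm this (dist_le_iterate_relax w hest k x))
  set Bad : Set V := {x ∈ U | (relax w)^[k] dhat x ≠ dist w s x} with hBad
  refine ⟨r '' Bad, ?_, ?_, ?_⟩
  · rintro - ⟨x, hx, rfl⟩
    exact hrS x hx.1
  · -- counting
    set F : V → Set V := fun u => {y ∈ U | r y = u} with hF
    have hcard : ∀ u ∈ r '' Bad, k ≤ (F u).ncard := by
      rintro - ⟨x, ⟨hxU, hxbad⟩, rfl⟩
      obtain ⟨a, b, hdec, ha⟩ := hrD x hxU
      have hlen := hbadlen x hxU hxbad a b hdec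
      have hnd : (sp x).Nodup := shortest_nodup w huniq (hw x) (hwt x) (hfin x hxU)
      have hnd2 : (r x :: b).Nodup := by
        rw [hdec] at hnd
        exact (List.nodup_append.mp hnd).2.1
      have hsub : {y | y ∈ (r x :: b)} ⊆ F (r x) := by
        intro y hy
        obtain ⟨h1, h2⟩ := hfib x hxU a b hdec ha y hy
        exact ⟨h1, h2⟩
      calc k ≤ (r x :: b).length := by simp; omega
        _ = (r x :: b).toFinset.card := (List.toFinset_card_of_nodup hnd2).symm
        _ = ({y | y ∈ (r x :: b)} : Set V).ncard := by
            rw [Set.ncard_eq_toFinset_card']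
            congr 1
            ext z
            simp
        _ ≤ (F (r x)).ncard := Set.ncard_le_ncard hsub (Set.toFinite _)
    -- fibers disjoint, contained in U
    have hsubU : ∀ u, F u ⊆ U := fun u y hy => hy.1
    have key : k * (r '' Bad).ncard ≤ U.ncard := by
      classical
      rw [Set.ncard_eq_toFinset_card' (r '' Bad), Set.ncard_eq_toFinset_card' U]
      have hdisj : ∀ u ∈ (r '' Bad).toFinset, ∀ u' ∈ (r '' Bad).toFinset, u ≠ u' →
          Disjoint (F u).toFinset (F u').toFinset := by
        intro u _ u' _ hne
        rw [Finset.disjoint_left]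
        intro y hy hy'
        simp only [Set.mem_toFinset] at hy hy'
        exact hne (hy.2.symm.trans hy'.2)
      calc k * (r '' Bad).toFinset.card
          = ∑ _u ∈ (r '' Bad).toFinset, k := by rw [Finset.sum_const, smul_eq_mul, mul_comm]
        _ ≤ ∑ u ∈ (r '' Bad).toFinset, (F u).toFinset.card := by
            refine Finset.sum_le_sum fun u hu => ?_
            rw [← Set.ncard_eq_toFinset_card']
            exact hcard u (by simpa using hu)
        _ = ((r '' Bad).toFinset.biUnion fun u => (F u).toFinset).card :=
            (Finset.card_biUnion hdisj).symm
        _ ≤ U.toFinset.card := by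
            refine Finset.card_le_card ?_
            intro y hy
            simp only [Finset.mem_biUnion, Set.mem_toFinset] at hy ⊢
            obtain ⟨u, -, hyu⟩ := hy
            exact hyu.1
    exact key
  · intro x hx
    by_cases hgood : (relax w)^[k] dhat x = dist w s x
    · exact Or.inl hgood
    · exact Or.inr ⟨r x, ⟨x, ⟨hx, hgood⟩, rfl⟩, hrC x hx, hrV x hx⟩

end SSSP
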